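/- arXiv:2007.01933 — 7 statements merged into one kernel-verified Lean document; each statement's English description precedes it below -/
import Mathlib

section
/- Let ε > 0 and k ∈ ℕ with 2^{-k} < ε/4. Then the set {x ∈ 2^{-k}ℤ² : |x| > ε and there exists y ∈ 2^{-k}ℤ² with |y| ≤ ε and |x − y| = 2^{-k}} is finite and has cardinality at most 56·ε·2^{k} + 28. -/
/-- A point of the square lattice `2^{-k}ℤ²` in the plane. -/
def IsLatticePoint (k : ℕ) (x : EuclideanSpace ℝ (Fin 2)) : Prop :=
  ∃ a b : ℤ, x 0 = (2 : ℝ) ^ (-(k : ℤ)) * a ∧ x 1 = (2 : ℝ) ^ (-(k : ℤ)) * b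

/-- The lattice points outside the closed disc `B_ε` that are adjacent (in the lattice
`2^{-k}ℤ²`) to a lattice point inside `B_ε`, i.e. the lattice neighbors of the darning
point `a*_k`. -/
def darningNeighbors (ε : ℝ) (k : ℕ) : Set (EuclideanSpace ℝ (Fin 2)) :=
  {x | IsLatticePoint k x ∧ ε < ‖x‖ ∧
    ∃ y : EuclideanSpace ℝ (Fin 2),
      IsLatticePoint k y ∧ ‖y‖ ≤ ε ∧ ‖x - y‖ = (2 : ℝ) ^ (-(k : ℤ))}

noncomputable def F1 (N : ℝ) : Finset (ℤ × ℤ) :=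
  (Finset.Icc (-(⌈N⌉+1)) (⌈N⌉+1)).biUnion fun a =>
    {a} ×ˢ Finset.Icc (⌊Real.sqrt ((N+1)^2 - (a:ℝ)^2)⌋ - 1) ⌊Real.sqrt ((N+1)^2 - (a:ℝ)^2)⌋

lemma mem_F1 (N : ℝ) (hN : 4 < N) (a b : ℤ) (hab : |a| ≤ b)
    (h1 : N^2 < (a:ℝ)^2 + (b:ℝ)^2) (h2 : (a:ℝ)^2 + (b:ℝ)^2 ≤ (N+1)^2) :
    (a, b) ∈ F1 N := by
  have hb0 : (0:ℤ) ≤ b := le_trans (abs_nonneg a) hab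
  have hb0' : (0:ℝ) ≤ (b:ℝ) := by exact_mod_cast hb0
  have hab' : (a:ℝ)^2 ≤ (b:ℝ)^2 := by
    have : a^2 ≤ b^2 := by
      have := sq_abs a; nlinarith [abs_nonneg a]
    exact_mod_cast this
  have hB2 : (0:ℝ) ≤ (N+1)^2 - (a:ℝ)^2 := by nlinarith [sq_nonneg (b:ℝ)]
  set B : ℝ := Real.sqrt ((N+1)^2 - (a:ℝ)^2) with hBdef
  have hBsq : B^2 = (N+1)^2 - (a:ℝ)^2 := Real.sq_sqrt hB2
  have hB0 : 0 ≤ B := Real.sqrt_nonneg _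
  -- b ≤ B
  have hbB : (b:ℝ) ≤ B := by
    nlinarith [sq_nonneg ((b:ℝ) - B)]
  -- b > N/√2 ⇒ 2N+1 ≤ 4b+4
  have hb2 : N^2 < 2 * (b:ℝ)^2 := by nlinarith
  have hbig : 2*N + 1 ≤ 4*(b:ℝ) + 4 := by nlinarith
  -- B < b + 2
  have hBb : B < (b:ℝ) + 2 := by nlinarith
  -- a range
  have haN : |(a:ℝ)| ≤ N + 1 := by
    rw [abs_le]; constructor <;> nlinarith [sq_nonneg (b:ℝ)]
  have haI : a ∈ Finset.Icc (-(⌈N⌉+1)) (⌈N⌉+1) := by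
    rw [Finset.mem_Icc]
    have hc : (N:ℝ) ≤ (⌈N⌉:ℝ) := Int.le_ceil N
    rw [abs_le] at haN
    constructor
    · have : (-(⌈N⌉+1) : ℝ) ≤ (a:ℝ) := by push_cast; nlinarith
      exact_mod_cast this
    · have : (a:ℝ) ≤ ((⌈N⌉+1 : ℤ) : ℝ) := by push_cast; nlinarith
      exact_mod_cast this
  have hbI : b ∈ Finset.Icc (⌊B⌋ - 1) ⌊B⌋ := by
    rw [Finset.mem_Icc]
    constructor
    · have h3 : (⌊B⌋:ℝ) < (b:ℝ) + 2 := lt_of_le_of_lt (Int.floor_le B) hBb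
      have : ⌊B⌋ < b + 2 := by exact_mod_cast h3
      omega
    · exact Int.le_floor.2 hbB
  simp only [F1, Finset.mem_biUnion]
  refine ⟨a, haI, ?_⟩
  rw [Finset.mem_product, ← hBdef]
  exact ⟨Finset.mem_singleton_self a, hbI⟩

noncomputable def Fbig (N : ℝ) : Finset (ℤ × ℤ) :=
  ((F1 N ∪ (F1 N).image fun p => (p.1, -p.2)) ∪ (F1 N).image fun p => (p.2, p.1)) ∪
    (F1 N).image fun p => (-p.2, p.1)

lemma mem_Fbig (N : ℝ) (hN : 4 < N) (a b : ℤ)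
    (h1 : N^2 < (a:ℝ)^2 + (b:ℝ)^2) (h2 : (a:ℝ)^2 + (b:ℝ)^2 ≤ (N+1)^2) :
    (a, b) ∈ Fbig N := by
  have hcases : (|a| ≤ b) ∨ (|a| ≤ -b) ∨ (|b| ≤ a) ∨ (|b| ≤ -a) := by
    rcases abs_cases a with ⟨ha, _⟩ | ⟨ha, _⟩ <;> rcases abs_cases b with ⟨hb, _⟩ | ⟨hb, _⟩ <;>
      omega
  simp only [Fbig, Finset.mem_union, Finset.mem_image]
  rcases hcases with h | h | h | h
  · exact Or.inl (Or.inl (Or.inl (mem_F1 N hN a b h h1 h2)))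
  · refine Or.inl (Or.inl (Or.inr ⟨(a, -b), mem_F1 N hN a (-b) h ?_ ?_, by simp⟩)) <;>
      push_cast <;> nlinarith
  · refine Or.inl (Or.inr ⟨(b, a), mem_F1 N hN b a h ?_ ?_, by simp⟩) <;>
      push_cast <;> nlinarith
  · refine Or.inr ⟨(b, -a), mem_F1 N hN b (-a) h ?_ ?_, by simp⟩ <;>
      push_cast <;> nlinarith

lemma card_Fbig_le (N : ℝ) (hN : 4 < N) : ((Fbig N).card : ℝ) ≤ 16 * N + 40 := by
  have h1 : (F1 N).card ≤ (Finset.Icc (-(⌈N⌉+1)) (⌈N⌉+1)).card * 2 := by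
    refine le_trans (Finset.card_biUnion_le) ?_
    calc _ ≤ ∑ _a ∈ Finset.Icc (-(⌈N⌉+1)) (⌈N⌉+1), 2 := by
          refine Finset.sum_le_sum fun a _ => ?_
          rw [Finset.card_product, Finset.card_singleton, one_mul, Int.card_Icc]
          omega
      _ = _ := by rw [Finset.sum_const, smul_eq_mul]
  have h2 : (Fbig N).card ≤ 4 * (F1 N).card := by
    have c1 := Finset.card_image_le (s := F1 N) (f := fun p : ℤ×ℤ => (p.1, -p.2))
    have c2 := Finset.card_image_le (s := F1 N) (f := fun p : ℤ×ℤ => (p.2, p.1))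
    have c3 := Finset.card_image_le (s := F1 N) (f := fun p : ℤ×ℤ => (-p.2, p.1))
    calc (Fbig N).card ≤ _ := Finset.card_union_le _ _
      _ ≤ _ := Nat.add_le_add_right (Finset.card_union_le _ _) _
      _ ≤ _ := Nat.add_le_add_right (Nat.add_le_add_right (Finset.card_union_le _ _) _) _
      _ ≤ 4 * (F1 N).card := by omega
  have h3 : ((Finset.Icc (-(⌈N⌉+1)) (⌈N⌉+1)).card : ℝ) ≤ 2 * N + 5 := by
    rw [Int.card_Icc]
    have hc : (⌈N⌉:ℝ) ≤ N + 1 := by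
      have := Int.ceil_lt_add_one N; linarith
    have h0 : (0:ℤ) ≤ ⌈N⌉ := by positivity
    have : ((⌈N⌉ + 1 + 1 - -(⌈N⌉ + 1)).toNat : ℤ) = 2 * ⌈N⌉ + 3 := by omega
    have : (((⌈N⌉ + 1 + 1 - -(⌈N⌉ + 1)).toNat : ℤ) : ℝ) = 2 * (⌈N⌉:ℝ) + 3 := by
      rw [this]; push_cast; ring
    push_cast at this ⊢
    rw [this]; linarith
  have h1' : ((F1 N).card : ℝ) ≤ (2 * N + 5) * 2 := by
    calc ((F1 N).card : ℝ) ≤ ((Finset.Icc (-(⌈N⌉+1)) (⌈N⌉+1)).card : ℝ) * 2 := by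
          exact_mod_cast h1
      _ ≤ (2 * N + 5) * 2 := by linarith
  calc ((Fbig N).card : ℝ) ≤ 4 * ((F1 N).card : ℝ) := by exact_mod_cast h2
    _ ≤ 16 * N + 40 := by linarith

/-- For `ε > 0` and `2^{-k} < ε/4`, the set of lattice neighbors of the
darning point is finite with at most `56·ε·2^k + 28` elements. -/
theorem card_darningNeighbors_le (ε : ℝ) (hε : 0 < ε) (k : ℕ)
    (hk : (2 : ℝ) ^ (-(k : ℤ)) < ε / 4) :
    (darningNeighbors ε k).Finite ∧
      ((darningNeighbors ε k).ncard : ℝ) ≤ 56 * ε * 2 ^ k + 28 := by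
  set h : ℝ := (2 : ℝ) ^ (-(k : ℤ)) with hh_def
  have hh : 0 < h := by positivity
  set N : ℝ := ε / h with hN_def
  have hNval : N = ε * 2 ^ k := by
    rw [hN_def, hh_def, zpow_neg, zpow_natCast]; field_simp
  have hN : 4 < N := by
    rw [hN_def, lt_div_iff₀ hh]; linarith
  set ψ : ℤ × ℤ → EuclideanSpace ℝ (Fin 2) :=
    fun p => (WithLp.toLp 2 ![h * p.1, h * p.2] : EuclideanSpace ℝ (Fin 2)) with hψ
  have hsub : darningNeighbors ε k ⊆ ψ '' (Fbig N : Set (ℤ × ℤ)) := by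
    rintro x ⟨⟨a, b, ha, hb⟩, hεx, y, hy_lat, hy, hxy⟩
    have hxψ : x = ψ (a, b) := by
      ext i
      fin_cases i
      · show x 0 = ψ (a, b) 0
        rw [ha]; simp [hψ, hh_def]
      · show x 1 = ψ (a, b) 1
        rw [hb]; simp [hψ, hh_def]
    have hxnorm : ‖x‖ ≤ ε + h := by
      calc ‖x‖ = ‖y + (x - y)‖ := by congr 1; abel
        _ ≤ ‖y‖ + ‖x - y‖ := norm_add_le _ _
        _ ≤ ε + h := by rw [hxy]; linarith
    have hx2 : ‖x‖^2 = (h * a)^2 + (h * b)^2 := by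
      rw [EuclideanSpace.norm_eq, Real.sq_sqrt (by positivity)]
      rw [Fin.sum_univ_two, hxψ]
      simp [hψ, Real.norm_eq_abs, abs_mul, mul_pow, sq_abs]
    have key1 : N^2 < (a:ℝ)^2 + (b:ℝ)^2 := by
      have hε2 : ε^2 < ‖x‖^2 := by nlinarith [norm_nonneg x]
      rw [hx2] at hε2
      rw [hN_def, div_pow, div_lt_iff₀ (by positivity)]
      nlinarith
    have key2 : (a:ℝ)^2 + (b:ℝ)^2 ≤ (N+1)^2 := by
      have h2 : ‖x‖^2 ≤ (ε + h)^2 := by nlinarith [norm_nonneg x]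
      rw [hx2] at h2
      have hεh : ε + h = h * (N + 1) := by
        rw [hN_def]; field_simp
      rw [hεh] at h2
      refine le_of_mul_le_mul_left ?_ (show (0:ℝ) < h^2 by positivity)
      nlinarith [h2]
    exact ⟨(a, b), mem_Fbig N hN a b key1 key2, hxψ.symm⟩
  have hfinF : (ψ '' (Fbig N : Set (ℤ × ℤ))).Finite := (Fbig N).finite_toSet.image ψ
  have hfin : (darningNeighbors ε k).Finite := hfinF.subset hsub
  refine ⟨hfin, ?_⟩
  have hcard : (darningNeighbors ε k).ncard ≤ (Fbig N).card := by
    calc (darningNeighbors ε k).ncard ≤ (ψ '' (Fbig N : Set (ℤ × ℤ))).ncard :=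
          Set.ncard_le_ncard hsub hfinF
      _ ≤ ((Fbig N : Set (ℤ × ℤ))).ncard := Set.ncard_image_le (Fbig N).finite_toSet
      _ = (Fbig N).card := Set.ncard_coe_finset _
  calc ((darningNeighbors ε k).ncard : ℝ) ≤ ((Fbig N).card : ℝ) := by exact_mod_cast hcard
    _ ≤ 16 * N + 40 := card_Fbig_le N hN
    _ ≤ 56 * ε * 2 ^ k + 28 := by rw [hNval]; nlinarith [hN, hNval]
end

section
/- Let ε > 0 and k ∈ ℕ with 2^{-k} < ε/4. For all x, y ∈ ℝ² with |x| ≥ ε, |y| ≥ ε and |x − y| ≤ 2^{-k}, both coordinates of F_ε(x) − F_ε(y) have absolute value at most 9·2^{-k}; in fact |F_ε(x)_i − F_ε(y)_i| ≤ 3·2^{-k} for i = 1, 2. -/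
/-- The projection map `F_ε(x) = ((|x| − ε)/|x|)·x`, defined on `{x ∈ ℝ² : |x| ≥ ε}`,
used to embed the plane component of the space of varying dimension into `ℝ³`. -/
noncomputable def Fmap (ε : ℝ) (x : EuclideanSpace ℝ (Fin 2)) : EuclideanSpace ℝ (Fin 2) :=
  ((‖x‖ - ε) / ‖x‖) • x

lemma abs_apply_le (v : EuclideanSpace ℝ (Fin 2)) (i : Fin 2) : |v i| ≤ ‖v‖ := by
  rw [EuclideanSpace.norm_eq]
  have : |v i| = Real.sqrt (‖v i‖ ^ 2) := by
    rw [Real.sqrt_sq_eq_abs]; simp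
  rw [this]
  apply Real.sqrt_le_sqrt
  exact Finset.single_le_sum (f := fun j => ‖v j‖^2) (fun j _ => sq_nonneg _) (Finset.mem_univ i)

lemma Fmap_lip (ε : ℝ) (hε : 0 < ε) (x y : EuclideanSpace ℝ (Fin 2))
    (hx : ε ≤ ‖x‖) (hy : ε ≤ ‖y‖) :
    ‖Fmap ε x - Fmap ε y‖ ≤ 3 * ‖x - y‖ := by
  have hax : (0:ℝ) < ‖x‖ := lt_of_lt_of_le hε hx
  have hay : (0:ℝ) < ‖y‖ := lt_of_lt_of_le hε hy
  set a := ‖x‖; set b := ‖y‖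
  have key : Fmap ε x - Fmap ε y = (x - y) - ((ε/a)•(x-y) + ((ε/a)-(ε/b))•y) := by
    unfold Fmap
    have h1 : (a - ε)/a = 1 - ε/a := by field_simp
    have h2 : (b - ε)/b = 1 - ε/b := by field_simp
    rw [h1, h2]
    module
  rw [key]
  have h3 : ‖(ε/a)•(x-y) + ((ε/a)-(ε/b))•y‖ ≤ 2 * ‖x - y‖ := by
    refine (norm_add_le _ _).trans ?_
    rw [norm_smul, norm_smul]
    have hεa : ‖(ε/a : ℝ)‖ ≤ 1 := by
      rw [Real.norm_eq_abs, abs_of_pos (by positivity)]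
      rw [div_le_one hax]; exact hx
    have hdiff : ‖(ε/a - ε/b : ℝ)‖ * b ≤ ‖x - y‖ := by
      rw [Real.norm_eq_abs]
      have : ε/a - ε/b = ε * (b - a) / (a * b) := by field_simp
      rw [this, abs_div, abs_of_pos (by positivity : (0:ℝ) < a * b)]
      rw [abs_mul, abs_of_pos hε, div_mul_eq_mul_div]
      rw [div_le_iff₀ (by positivity)]
      have hba : |b - a| ≤ ‖x - y‖ := by
        have := abs_norm_sub_norm_le y x
        rw [← norm_neg (y - x), neg_sub] at this
        exact this
      calc ε * |b - a| * b ≤ a * ‖x-y‖ * b := by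
            apply mul_le_mul_of_nonneg_right _ hay.le
            exact mul_le_mul hx hba (abs_nonneg _) hax.le
        _ = ‖x - y‖ * (a * b) := by ring
    calc ‖(ε/a : ℝ)‖ * ‖x - y‖ + ‖(ε/a - ε/b : ℝ)‖ * ‖y‖
        ≤ 1 * ‖x - y‖ + ‖x - y‖ := by
          gcongr <;> first | exact norm_nonneg _ | skip
        _ = 2 * ‖x - y‖ := by ring
  calc ‖(x - y) - ((ε/a)•(x-y) + ((ε/a)-(ε/b))•y)‖
      ≤ ‖x - y‖ + ‖(ε/a)•(x-y) + ((ε/a)-(ε/b))•y‖ := norm_sub_le _ _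
    _ ≤ ‖x - y‖ + 2 * ‖x - y‖ := by linarith
    _ = 3 * ‖x - y‖ := by ring

/-- If `|x|, |y| ≥ ε` and `|x − y| ≤ 2^{-k}` with `2^{-k} < ε/4`, then
each coordinate of `F_ε(x) − F_ε(y)` has absolute value at most `3·2^{-k}`, and in
particular at most `9·2^{-k}`. -/
theorem coord_diff_Fmap_le (ε : ℝ) (hε : 0 < ε) (k : ℕ)
    (hk : (2 : ℝ) ^ (-(k : ℤ)) < ε / 4) (x y : EuclideanSpace ℝ (Fin 2))
    (hx : ε ≤ ‖x‖) (hy : ε ≤ ‖y‖) (hxy : ‖x - y‖ ≤ (2 : ℝ) ^ (-(k : ℤ))) :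
    ∀ i : Fin 2,
      |Fmap ε x i - Fmap ε y i| ≤ 3 * (2 : ℝ) ^ (-(k : ℤ)) ∧
        |Fmap ε x i - Fmap ε y i| ≤ 9 * (2 : ℝ) ^ (-(k : ℤ)) := by
  intro i
  have h1 : |Fmap ε x i - Fmap ε y i| ≤ 3 * (2 : ℝ) ^ (-(k : ℤ)) := by
    have h2 : Fmap ε x i - Fmap ε y i = (Fmap ε x - Fmap ε y) i := rfl
    rw [h2]
    calc |(Fmap ε x - Fmap ε y) i| ≤ ‖Fmap ε x - Fmap ε y‖ := abs_apply_le _ i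
      _ ≤ 3 * ‖x - y‖ := Fmap_lip ε hε x y hx hy
      _ ≤ 3 * (2 : ℝ) ^ (-(k : ℤ)) := by linarith
  have hpos : (0:ℝ) < (2:ℝ) ^ (-(k:ℤ)) := by positivity
  exact ⟨h1, h1.trans (by linarith)⟩
end

section
/- Let ε > 0 and let x, y ∈ ℝ² satisfy |x| ≥ ε, |y| ≥ ε and ⟨x, y⟩ ≤ 0 (where ⟨·,·⟩ is the Euclidean inner product, so the angle between x and y has nonpositive cosine). Then ‖F_ε(x) − F_ε(y)‖ ≥ ((|x| − ε) + (|y| − ε))/2 ≥ ρ(x, y)/2. -/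
open scoped RealInnerProductSpace

/-- If `|x|, |y| ≥ ε` and `⟨x, y⟩ ≤ 0`, then
`‖F_ε(x) − F_ε(y)‖ ≥ ((|x| − ε) + (|y| − ε))/2 ≥ ρ(x, y)/2`, where
`ρ(x, y) = min(|x − y|, (|x| − ε) + (|y| − ε))`. -/
theorem Fmap_diff_ge_of_inner_nonpos (ε : ℝ) (hε : 0 < ε)
    (x y : EuclideanSpace ℝ (Fin 2)) (hx : ε ≤ ‖x‖) (hy : ε ≤ ‖y‖)
    (hinner : ⟪x, y⟫ ≤ 0) :
    ((‖x‖ - ε) + (‖y‖ - ε)) / 2 ≤ ‖Fmap ε x - Fmap ε y‖ ∧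
      min ‖x - y‖ ((‖x‖ - ε) + (‖y‖ - ε)) / 2 ≤ ((‖x‖ - ε) + (‖y‖ - ε)) / 2 := by
  have hx0 : (0:ℝ) < ‖x‖ := lt_of_lt_of_le hε hx
  have hy0 : (0:ℝ) < ‖y‖ := lt_of_lt_of_le hε hy
  have ha : (0:ℝ) ≤ ‖x‖ - ε := by linarith
  have hb : (0:ℝ) ≤ ‖y‖ - ε := by linarith
  constructor
  · have hnx : ‖Fmap ε x‖ = ‖x‖ - ε := by
      rw [Fmap, norm_smul, Real.norm_eq_abs, abs_of_nonneg (div_nonneg ha hx0.le)]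
      field_simp
    have hny : ‖Fmap ε y‖ = ‖y‖ - ε := by
      rw [Fmap, norm_smul, Real.norm_eq_abs, abs_of_nonneg (div_nonneg hb hy0.le)]
      field_simp
    have hip : ⟪Fmap ε x, Fmap ε y⟫ ≤ 0 := by
      rw [Fmap, Fmap, real_inner_smul_left, real_inner_smul_right]
      have h1 : (0:ℝ) ≤ (‖x‖ - ε) / ‖x‖ := div_nonneg ha hx0.le
      have h2 : (0:ℝ) ≤ (‖y‖ - ε) / ‖y‖ := div_nonneg hb hy0.le
      exact mul_nonpos_of_nonneg_of_nonpos h1 (mul_nonpos_of_nonneg_of_nonpos h2 hinner)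
    have hsq : ((‖x‖ - ε) + (‖y‖ - ε)) ^ 2 / 4 ≤ ‖Fmap ε x - Fmap ε y‖ ^ 2 := by
      rw [norm_sub_sq_real, hnx, hny]
      nlinarith [sq_nonneg ((‖x‖ - ε) - (‖y‖ - ε))]
    have := le_of_pow_le_pow_left₀ (n := 2) two_ne_zero (norm_nonneg _)
      (by rw [div_pow]; linarith : (((‖x‖ - ε) + (‖y‖ - ε)) / 2) ^ 2 ≤ ‖Fmap ε x - Fmap ε y‖ ^ 2)
    linarith
  · have := min_le_right ‖x - y‖ ((‖x‖ - ε) + (‖y‖ - ε))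
    linarith
end

section
/- Let ε > 0 and let x, y ∈ ℝ² satisfy |x| ≥ ε, |y| ≥ ε and 0 < ⟨x, y⟩/(|x|·|y|) ≤ 3/4 (where ⟨·,·⟩ is the Euclidean inner product). Then ‖F_ε(x) − F_ε(y)‖ ≥ ρ(x, y)/8. -/
open scoped RealInnerProductSpace

/-- If `|x|, |y| ≥ ε` and `0 < ⟨x, y⟩/(|x|·|y|) ≤ 3/4`, then
`‖F_ε(x) − F_ε(y)‖ ≥ ρ(x, y)/8`, where
`ρ(x, y) = min(|x − y|, (|x| − ε) + (|y| − ε))`. -/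
theorem Fmap_diff_ge_of_cos_le (ε : ℝ) (hε : 0 < ε)
    (x y : EuclideanSpace ℝ (Fin 2)) (hx : ε ≤ ‖x‖) (hy : ε ≤ ‖y‖)
    (hcos_pos : 0 < ⟪x, y⟫ / (‖x‖ * ‖y‖)) (hcos_le : ⟪x, y⟫ / (‖x‖ * ‖y‖) ≤ 3 / 4) :
    min ‖x - y‖ ((‖x‖ - ε) + (‖y‖ - ε)) / 8 ≤ ‖Fmap ε x - Fmap ε y‖ := by
  have hx0 : (0:ℝ) < ‖x‖ := lt_of_lt_of_le hε hx
  have hy0 : (0:ℝ) < ‖y‖ := lt_of_lt_of_le hε hy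
  set s := ‖x‖ - ε with hs
  set t := ‖y‖ - ε with ht
  have hs0 : 0 ≤ s := by simp [hs]; linarith
  have ht0 : 0 ≤ t := by simp [ht]; linarith
  have hsq : ‖Fmap ε x - Fmap ε y‖ ^ 2
      = s ^ 2 + t ^ 2 - 2 * s * t * (⟪x, y⟫ / (‖x‖ * ‖y‖)) := by
    rw [Fmap, Fmap, @norm_sub_sq_real, norm_smul, norm_smul,
      real_inner_smul_left, real_inner_smul_right,
      Real.norm_eq_abs, Real.norm_eq_abs,
      abs_of_nonneg (div_nonneg hs0 hx0.le), abs_of_nonneg (div_nonneg ht0 hy0.le)]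
    field_simp
    ring
  have hst : 0 ≤ s * t := mul_nonneg hs0 ht0
  have hmul : s * t * (⟪x, y⟫ / (‖x‖ * ‖y‖)) ≤ s * t * (3 / 4) :=
    mul_le_mul_of_nonneg_left hcos_le hst
  have key : ((s + t) / 8) ^ 2 ≤ ‖Fmap ε x - Fmap ε y‖ ^ 2 := by
    rw [hsq]
    nlinarith [sq_nonneg (s - t), hst]
  have h1 : (s + t) / 8 ≤ ‖Fmap ε x - Fmap ε y‖ := by
    nlinarith [norm_nonneg (Fmap ε x - Fmap ε y), add_nonneg hs0 ht0]
  have h2 : min ‖x - y‖ (s + t) ≤ s + t := min_le_right _ _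
  linarith
end

section
/- Let ε > 0 and let x, y ∈ ℝ² satisfy |x| ≥ ε, |y| ≥ ε, ⟨x, y⟩/(|x|·|y|) > 3/4 and |x| + |y| ≥ 8ε (where ⟨·,·⟩ is the Euclidean inner product). Then ρ(x, y)² ≤ 8·‖F_ε(x) − F_ε(y)‖². -/
open scoped RealInnerProductSpace

/-- If `|x|, |y| ≥ ε`, `⟨x, y⟩/(|x|·|y|) > 3/4` and `|x| + |y| ≥ 8ε`,
then `ρ(x, y)² ≤ 8·‖F_ε(x) − F_ε(y)‖²`, where
`ρ(x, y) = min(|x − y|, (|x| − ε) + (|y| − ε))`. -/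
theorem rho_sq_le_of_cos_gt_far (ε : ℝ) (hε : 0 < ε)
    (x y : EuclideanSpace ℝ (Fin 2)) (hx : ε ≤ ‖x‖) (hy : ε ≤ ‖y‖)
    (hcos : 3 / 4 < ⟪x, y⟫ / (‖x‖ * ‖y‖)) (hfar : 8 * ε ≤ ‖x‖ + ‖y‖) :
    (min ‖x - y‖ ((‖x‖ - ε) + (‖y‖ - ε))) ^ 2 ≤ 8 * ‖Fmap ε x - Fmap ε y‖ ^ 2 := by
  set a := ‖x‖ with ha_def
  set b := ‖y‖ with hb_def
  have ha : 0 < a := lt_of_lt_of_le hε hx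
  have hb : 0 < b := lt_of_lt_of_le hε hy
  have hab : 0 < a * b := mul_pos ha hb
  have hCS : ⟪x, y⟫ ≤ a * b := real_inner_le_norm x y
  have hcos' : 3 / 4 * (a * b) < ⟪x, y⟫ := (lt_div_iff₀ hab).mp hcos
  have hxy : ‖x - y‖ ^ 2 = a ^ 2 - 2 * ⟪x, y⟫ + b ^ 2 := by
    rw [@norm_sub_sq_real]
  have hF : ‖Fmap ε x - Fmap ε y‖ ^ 2
      = (a - ε) ^ 2 - 2 * ((a - ε) * (b - ε) * ⟪x, y⟫ / (a * b)) + (b - ε) ^ 2 := by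
    simp only [Fmap, ← ha_def, ← hb_def]
    rw [@norm_sub_sq_real, real_inner_smul_left, real_inner_smul_right,
      norm_smul, norm_smul, Real.norm_eq_abs, Real.norm_eq_abs,
      abs_of_nonneg (div_nonneg (by linarith) ha.le),
      abs_of_nonneg (div_nonneg (by linarith) hb.le)]
    field_simp
    ring
  have key : ‖x - y‖ ^ 2 ≤ 8 * ‖Fmap ε x - Fmap ε y‖ ^ 2 := by
    rw [hxy, hF]
    rw [show (8 : ℝ) * ((a - ε) ^ 2 - 2 * ((a - ε) * (b - ε) * ⟪x, y⟫ / (a * b)) + (b - ε) ^ 2)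
        = (8 * ((a - ε) ^ 2 * (a * b) - 2 * ((a - ε) * (b - ε)) * ⟪x, y⟫
            + (b - ε) ^ 2 * (a * b))) / (a * b) by field_simp,
      le_div_iff₀ hab]
    nlinarith [mul_nonneg (sub_nonneg.mpr hCS)
        (mul_nonneg (by linarith : (0:ℝ) ≤ a + b - 8 * ε) (by linarith : (0:ℝ) ≤ 7 * (a + b) - 8 * ε)),
      mul_nonneg (by nlinarith : (0:ℝ) ≤ 4 * ⟪x, y⟫ - 3 * (a * b)) (sq_nonneg (a - b)),
      mul_nonneg hab.le (sub_nonneg.mpr hCS), sq_nonneg (a - b), hab]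
  have hmin0 : 0 ≤ min ‖x - y‖ ((a - ε) + (b - ε)) :=
    le_min (norm_nonneg _) (by linarith)
  calc (min ‖x - y‖ ((a - ε) + (b - ε))) ^ 2
      ≤ ‖x - y‖ ^ 2 := pow_le_pow_left₀ hmin0 (min_le_left _ _) 2
    _ ≤ 8 * ‖Fmap ε x - Fmap ε y‖ ^ 2 := key
end

section
/- Let ε > 0. There exists a constant c > 0, depending only on ε, such that for all x, y ∈ ℝ² with |x| ≥ ε, |y| ≥ ε, ⟨x, y⟩/(|x|·|y|) > 3/4 and |x| + |y| ≤ 8ε (where ⟨·,·⟩ is the Euclidean inner product), one has ‖F_ε(x) − F_ε(y)‖² ≥ c·ρ(x, y)⁴. -/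
open scoped RealInnerProductSpace

lemma key_alg (ε r s q : ℝ) (hε : 0 < ε) (hr : ε ≤ r) (hs : ε ≤ s)
    (hq : 3/4 < q) (hq1 : q ≤ 1) (hsum : r + s ≤ 8*ε) :
    ((r-ε) + (s-ε))^2 * (r^2 + s^2 - 2*(r*s*q)) ≤
      64*ε^2*((r-ε)^2 + (s-ε)^2 - 2*((r-ε)*(s-ε)*q)) := by
  set a := r - ε with ha
  set b := s - ε with hb
  have ha0 : 0 ≤ a := by linarith
  have hb0 : 0 ≤ b := by linarith
  set t := 1 - q with ht
  have ht0 : 0 ≤ t := by simp [ht]; linarith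
  have ht4 : t ≤ 1/4 := by simp [ht]; linarith
  have hab : a + b ≤ 6*ε := by simp [ha, hb]; linarith
  have hrs : r*s ≤ 16*ε^2 := by nlinarith [sq_nonneg (r-s)]
  have habt0 : 0 ≤ a*b*t := mul_nonneg (mul_nonneg ha0 hb0) ht0
  have h1 : r^2 + s^2 - 2*(r*s*q) = (a-b)^2 + 2*(r*s)*t := by
    simp only [ha, hb, ht]; ring
  have h2 : a^2 + b^2 - 2*(a*b*q) = (a-b)^2 + 2*(a*b)*t := by
    simp only [ht]; ring
  rw [h1, h2]
  have habt : (a+b)^2 * t ≤ (a-b)^2/4 + 4*(a*b*t) := by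
    nlinarith [sq_nonneg (a-b)]
  have hpos : (0:ℝ) ≤ (a-b)^2/4 + 4*(a*b*t) :=
    add_nonneg (by positivity) (by linarith)
  have hstep : (a+b)^2 * (2*(r*s)*t) ≤ 8*ε^2*(a-b)^2 + 128*ε^2*(a*b*t) :=
    calc (a+b)^2 * (2*(r*s)*t) = 2*(r*s)*((a+b)^2*t) := by ring
    _ ≤ 2*(r*s)*((a-b)^2/4 + 4*(a*b*t)) :=
        mul_le_mul_of_nonneg_left habt (by have := mul_pos (hε.trans_le hr) (hε.trans_le hs); linarith)
    _ ≤ 32*ε^2*((a-b)^2/4 + 4*(a*b*t)) :=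
        mul_le_mul_of_nonneg_right (by linarith) hpos
    _ = 8*ε^2*(a-b)^2 + 128*ε^2*(a*b*t) := by ring
  have hA : (a+b)^2*(a-b)^2 ≤ 36*ε^2*(a-b)^2 := by
    have : (a+b)^2 ≤ 36*ε^2 := by nlinarith
    exact mul_le_mul_of_nonneg_right this (sq_nonneg _)
  have hexp : (a+b)^2 * ((a-b)^2 + 2*(r*s)*t)
      = (a+b)^2*(a-b)^2 + (a+b)^2*(2*(r*s)*t) := by ring
  have hgoal : 64*ε^2*((a-b)^2 + 2*(a*b)*t)
      = 44*ε^2*(a-b)^2 + 128*ε^2*(a*b*t) + 20*ε^2*(a-b)^2 := by ring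
  have h20 : 0 ≤ 20*ε^2*(a-b)^2 := by positivity
  linarith

/-- There is a constant `c > 0`, depending only on `ε`, such that for
all `x, y` with `|x|, |y| ≥ ε`, `⟨x, y⟩/(|x|·|y|) > 3/4` and `|x| + |y| ≤ 8ε`, one has
`‖F_ε(x) − F_ε(y)‖² ≥ c·ρ(x, y)⁴`, where
`ρ(x, y) = min(|x − y|, (|x| − ε) + (|y| − ε))`. -/
theorem Fmap_diff_sq_ge_of_cos_gt_near (ε : ℝ) (hε : 0 < ε) :
    ∃ c > (0 : ℝ), ∀ x y : EuclideanSpace ℝ (Fin 2),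
      ε ≤ ‖x‖ → ε ≤ ‖y‖ → 3 / 4 < ⟪x, y⟫ / (‖x‖ * ‖y‖) → ‖x‖ + ‖y‖ ≤ 8 * ε →
        c * (min ‖x - y‖ ((‖x‖ - ε) + (‖y‖ - ε))) ^ 4 ≤ ‖Fmap ε x - Fmap ε y‖ ^ 2 := by
  refine ⟨1/(64*ε^2), by positivity, fun x y hx hy hcos hsum => ?_⟩
  set r := ‖x‖ with hrdef
  set s := ‖y‖ with hsdef
  have hr0 : 0 < r := hε.trans_le hx
  have hs0 : 0 < s := hε.trans_le hy
  have hrs0 : (0:ℝ) < r*s := mul_pos hr0 hs0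
  set q : ℝ := ⟪x, y⟫ / (r*s) with hqdef
  have hq1 : q ≤ 1 := by
    rw [hqdef, div_le_one hrs0]
    exact real_inner_le_norm x y
  have hrsq : r*s*q = ⟪x, y⟫ := by
    rw [hqdef]; field_simp
  have hxy2 : ‖x - y‖^2 = r^2 + s^2 - 2*(r*s*q) := by
    rw [hrsq, @norm_sub_sq_real]; ring
  have hF2 : ‖Fmap ε x - Fmap ε y‖^2 = (r-ε)^2 + (s-ε)^2 - 2*((r-ε)*(s-ε)*q) := by
    rw [Fmap, Fmap, @norm_sub_sq_real, norm_smul, norm_smul,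
      real_inner_smul_left, real_inner_smul_right]
    rw [Real.norm_eq_abs, Real.norm_eq_abs, mul_pow, mul_pow, sq_abs, sq_abs]
    rw [← hrdef, ← hsdef, ← hrsq]
    field_simp
    ring
  set m := min ‖x - y‖ ((r - ε) + (s - ε)) with hmdef
  have ha0 : (0:ℝ) ≤ r - ε := by linarith
  have hb0 : (0:ℝ) ≤ s - ε := by linarith
  have hm0 : 0 ≤ m := le_min (norm_nonneg _) (by linarith)
  have hm1 : m ≤ ‖x - y‖ := min_le_left _ _
  have hm2 : m ≤ (r - ε) + (s - ε) := min_le_right _ _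
  have hm4 : m^4 ≤ ((r-ε) + (s-ε))^2 * ‖x - y‖^2 := by
    have e1 : m^2 ≤ ((r-ε) + (s-ε))^2 := pow_le_pow_left₀ hm0 hm2 2
    have e2 : m^2 ≤ ‖x - y‖^2 := pow_le_pow_left₀ hm0 hm1 2
    calc m^4 = m^2 * m^2 := by ring
    _ ≤ ((r-ε) + (s-ε))^2 * ‖x - y‖^2 :=
        mul_le_mul e1 e2 (by positivity) (by positivity)
  have hkey := key_alg ε r s q hε hx hy hcos hq1 hsum
  rw [← hxy2, ← hF2] at hkey
  have hfin : m^4 ≤ 64*ε^2 * ‖Fmap ε x - Fmap ε y‖^2 := le_trans hm4 hkey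
  have := mul_le_mul_of_nonneg_left hfin (by positivity : (0:ℝ) ≤ 1/(64*ε^2))
  calc 1/(64*ε^2) * m^4 ≤ 1/(64*ε^2) * (64*ε^2 * ‖Fmap ε x - Fmap ε y‖^2) := this
  _ = ‖Fmap ε x - Fmap ε y‖^2 := by field_simp
end

section
/- Let (S, d) be a metric space, let g : S → ℝ be bounded and continuous, let T > 0 and 0 ≤ t₁ < t₂ ≤ T. Let ω : [0, T] → S and ω_n : [0, T] → S (n ∈ ℕ) all be right-continuous with left limits. Suppose there exist increasing homeomorphisms λ_n : [0, T] → [0, T] such that sup_{t ∈ [0,T]} |λ_n(t) − t| → 0 and sup_{t ∈ [0,T]} d(ω_n(t), ω(λ_n(t))) → 0 as n → ∞. Then ∫_{t₁}^{t₂} g(ω_n(s)) ds → ∫_{t₁}^{t₂} g(ω(s)) ds as n → ∞. -/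
open Filter Set MeasureTheory

/-- A function that is right-continuous on `[0,T)` composed with a bounded continuous map is
a.e. strongly measurable on `(t₁, t₂] ⊆ [0,T]`. -/
lemma aux_aesm_of_rightCont {S : Type*} [MetricSpace S] (g : S → ℝ) (hg : Continuous g)
    (f : ℝ → S) (T t₁ t₂ : ℝ) (h0 : 0 ≤ t₁) (h2 : t₂ ≤ T)
    (hf : ∀ t ∈ Ico 0 T, Tendsto f (nhdsWithin t (Ici t)) (nhds (f t))) :
    AEStronglyMeasurable (fun t => g (f t)) (volume.restrict (Ioc t₁ t₂)) := by
  have hFm : ∀ k : ℕ, Measurable (fun t : ℝ => g (f ((⌈t * 2 ^ k⌉ : ℤ) / 2 ^ k))) := by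
    intro k
    exact (Measurable.of_discrete (f := fun z : ℤ => g (f ((z : ℝ) / 2 ^ k)))).comp
      (Int.measurable_ceil.comp (measurable_id.mul_const _))
  refine aestronglyMeasurable_of_tendsto_ae (f := fun k t => g (f ((⌈t * 2 ^ k⌉ : ℤ) / 2 ^ k)))
    atTop (fun k => (hFm k).aestronglyMeasurable) ?_
  rw [ae_restrict_iff' measurableSet_Ioc]
  have hnull : (volume : Measure ℝ) {T} = 0 := measure_singleton T
  rw [MeasureTheory.ae_iff]
  refine measure_mono_null (fun t ht => ?_) hnull
  simp only [mem_setOf_eq, not_forall] at ht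
  obtain ⟨htmem, hnot⟩ := ht
  by_contra hne
  apply hnot
  have htT : t < T := by
    rcases lt_or_eq_of_le (le_trans htmem.2 h2) with h | h
    · exact h
    · exact absurd h hne
  have ht0 : (0:ℝ) ≤ t := le_trans h0 (le_of_lt htmem.1)
  -- the approximating points tend to `t` from the right
  have hse : ∀ k : ℕ, t ≤ ((⌈t * 2 ^ k⌉ : ℤ) : ℝ) / 2 ^ k := by
    intro k
    rw [le_div_iff₀ (by positivity : (0:ℝ) < 2 ^ k)]
    exact Int.le_ceil _
  have hsl : ∀ k : ℕ, ((⌈t * 2 ^ k⌉ : ℤ) : ℝ) / 2 ^ k ≤ t + (1 / 2) ^ k := by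
    intro k
    rw [div_le_iff₀ (by positivity : (0:ℝ) < 2 ^ k)]
    have := (Int.ceil_lt_add_one (t * 2 ^ k)).le
    calc ((⌈t * 2 ^ k⌉ : ℤ) : ℝ) ≤ t * 2 ^ k + 1 := this
      _ = (t + (1/2)^k) * 2 ^ k := by
          rw [add_mul, div_pow, one_pow, div_mul_cancel₀ _ (by positivity)]
  have htend : Tendsto (fun k : ℕ => ((⌈t * 2 ^ k⌉ : ℤ) : ℝ) / 2 ^ k) atTop
      (nhdsWithin t (Ici t)) := by
    rw [tendsto_nhdsWithin_iff]
    constructor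
    · have h1 : Tendsto (fun k : ℕ => t + (1/2 : ℝ) ^ k) atTop (nhds t) := by
        have := tendsto_pow_atTop_nhds_zero_of_lt_one (by norm_num : (0:ℝ) ≤ 1/2)
          (by norm_num : (1/2 : ℝ) < 1)
        simpa using (tendsto_const_nhds (x := t)).add this
      exact tendsto_of_tendsto_of_tendsto_of_le_of_le tendsto_const_nhds h1 hse hsl
    · exact Filter.Eventually.of_forall (fun k => hse k)
  exact (hg.tendsto _).comp ((hf t ⟨ht0, htT⟩).comp htend)

/-- Skorokhod continuity of `ω ↦ ∫_{t₁}^{t₂} g(ω(s)) ds`: if càdlàg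
paths `ω_n : [0,T] → S` converge to a càdlàg path `ω` in the Skorokhod sense (there are
increasing homeomorphisms `λ_n` of `[0,T]` with `sup |λ_n(t) − t| → 0` and
`sup d(ω_n(t), ω(λ_n(t))) → 0`), then for any bounded continuous `g : S → ℝ` and
`0 ≤ t₁ < t₂ ≤ T`, `∫_{t₁}^{t₂} g(ω_n(s)) ds → ∫_{t₁}^{t₂} g(ω(s)) ds`. -/
theorem integral_skorokhod_continuous {S : Type*} [MetricSpace S]
    (g : S → ℝ) (hg_cont : Continuous g) (hg_bdd : ∃ M : ℝ, ∀ s : S, |g s| ≤ M)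
    (T t₁ t₂ : ℝ) (hT : 0 < T) (ht₁ : 0 ≤ t₁) (ht₁₂ : t₁ < t₂) (ht₂ : t₂ ≤ T)
    (ω : ℝ → S) (ωn : ℕ → ℝ → S)
    (hω_rc : ∀ t ∈ Ico 0 T, Tendsto ω (nhdsWithin t (Ici t)) (nhds (ω t)))
    (hω_ll : ∀ t ∈ Ioc 0 T, ∃ L : S, Tendsto ω (nhdsWithin t (Iio t)) (nhds L))
    (hωn_rc : ∀ n, ∀ t ∈ Ico 0 T, Tendsto (ωn n) (nhdsWithin t (Ici t)) (nhds (ωn n t)))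
    (hωn_ll : ∀ n, ∀ t ∈ Ioc 0 T, ∃ L : S, Tendsto (ωn n) (nhdsWithin t (Iio t)) (nhds L))
    (l : ℕ → ℝ → ℝ)
    (hl_cont : ∀ n, ContinuousOn (l n) (Icc 0 T))
    (hl_mono : ∀ n, StrictMonoOn (l n) (Icc 0 T))
    (hl_zero : ∀ n, l n 0 = 0) (hl_T : ∀ n, l n T = T)
    (hl_conv : ∀ δ > (0 : ℝ), ∀ᶠ n in atTop, ∀ t ∈ Icc 0 T, |l n t - t| < δ)
    (hω_conv : ∀ δ > (0 : ℝ), ∀ᶠ n in atTop, ∀ t ∈ Icc 0 T, dist (ωn n t) (ω (l n t)) < δ) :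
    Tendsto (fun n => ∫ s in t₁..t₂, g (ωn n s)) atTop (nhds (∫ s in t₁..t₂, g (ω s))) := by
  classical
  obtain ⟨M, hM⟩ := hg_bdd
  -- choose left limits
  obtain ⟨Ls, hLs⟩ : ∃ Ls : ℝ → S, ∀ t ∈ Ioc 0 T,
      Tendsto ω (nhdsWithin t (Iio t)) (nhds (Ls t)) :=
    ⟨fun t => if h : t ∈ Ioc 0 T then (hω_ll t h).choose else ω t,
     fun t ht => by simp only [dif_pos ht]; exact (hω_ll t ht).choose_spec⟩
  -- the discontinuity set is countable
  set D : Set ℝ := {s | s ∈ Ioo 0 T ∧ Ls s ≠ ω s} with hD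
  have hDcount : D.Countable := by
    have hsub : D ⊆ ⋃ k : ℕ, {s | s ∈ Ioo 0 T ∧ 1 / ((k : ℝ) + 1) < dist (Ls s) (ω s)} := by
      intro s hs
      have hd : 0 < dist (Ls s) (ω s) := dist_pos.2 hs.2
      obtain ⟨k, hk⟩ := exists_nat_one_div_lt hd
      exact mem_iUnion.2 ⟨k, hs.1, hk⟩
    refine Set.Countable.mono hsub (Set.countable_iUnion fun k => ?_)
    set ε : ℝ := 1 / ((k : ℝ) + 1) with hε
    have hε0 : 0 < ε := by positivity
    set Dk : Set ℝ := {s | s ∈ Ioo 0 T ∧ ε < dist (Ls s) (ω s)} with hDk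
    -- for each `s ∈ Ioo 0 T` choose a rational witness
    have hchoice : ∀ s : Dk, ∃ q : ℚ, (q : ℝ) < (s : ℝ) ∧
        ∀ u ∈ Ioo (q : ℝ) (s : ℝ), dist (ω u) (Ls (s : ℝ)) < ε / 3 := by
      rintro ⟨s, hs, -⟩
      have hsIoc : s ∈ Ioc 0 T := ⟨hs.1, hs.2.le⟩
      have := hLs s hsIoc
      have hev : {u | dist (ω u) (Ls s) < ε / 3} ∈ nhdsWithin s (Iio s) :=
        this (Metric.ball_mem_nhds _ (by positivity))
      obtain ⟨a, ha, hsub⟩ := mem_nhdsLT_iff_exists_Ioo_subset.1 hev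
      obtain ⟨q, hq1, hq2⟩ := exists_rat_btwn (show a < s from ha)
      refine ⟨q, hq2, fun u hu => hsub ⟨lt_trans hq1 hu.1, hu.2⟩⟩
    choose q hq1 hq2 using hchoice
    -- `q` is injective on `Dk`
    have hkey : ∀ s s' : Dk, (s : ℝ) < (s' : ℝ) → q s ≠ q s' := by
      rintro s s' hlt heq
      have hqlt : (q s' : ℝ) < (s : ℝ) := by rw [← heq]; exact hq1 s
      -- `s` itself lies in `Ioo (q s') s'`
      have hsmem : (s : ℝ) ∈ Ioo ((q s' : ℝ)) ((s' : ℝ)) := ⟨hqlt, hlt⟩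
      have hA : dist (ω (s : ℝ)) (Ls (s' : ℝ)) < ε / 3 := hq2 s' _ hsmem
      -- left limit at `s` stays `ε/3`-close to `Ls s'`
      have hsIoc : (s : ℝ) ∈ Ioc 0 T := ⟨s.2.1.1, s.2.1.2.le⟩
      have hll := hLs (s : ℝ) hsIoc
      have hBtends : Tendsto (fun u => dist (ω u) (Ls (s' : ℝ)))
          (nhdsWithin (s : ℝ) (Iio (s : ℝ))) (nhds (dist (Ls (s : ℝ)) (Ls (s' : ℝ)))) :=
        (Continuous.tendsto (continuous_id.dist continuous_const) _).comp hll
      have hne : (nhdsWithin (s : ℝ) (Iio (s : ℝ))).NeBot := by infer_instance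
      have hB : dist (Ls (s : ℝ)) (Ls (s' : ℝ)) ≤ ε / 3 := by
        refine le_of_tendsto hBtends ?_
        have hmem : Ioo ((q s' : ℝ)) ((s : ℝ)) ∈ nhdsWithin (s : ℝ) (Iio (s : ℝ)) := by
          refine mem_nhdsLT_iff_exists_Ioo_subset.2 ⟨(q s' : ℝ), hqlt, subset_rfl⟩
        filter_upwards [hmem] with u hu
        exact (hq2 s' u ⟨hu.1, lt_trans hu.2 hlt⟩).le
      have : dist (Ls (s : ℝ)) (ω (s : ℝ)) ≤ 2 * (ε / 3) := by
        calc dist (Ls (s : ℝ)) (ω (s : ℝ))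
            ≤ dist (Ls (s : ℝ)) (Ls (s' : ℝ)) + dist (Ls (s' : ℝ)) (ω (s : ℝ)) :=
              dist_triangle _ _ _
          _ ≤ ε / 3 + ε / 3 := by
              refine add_le_add hB ?_
              rw [dist_comm]; exact hA.le
          _ = 2 * (ε / 3) := by ring
      have hcon := s.2.2
      linarith
    have hinj : Function.Injective q := by
      intro s s' heq
      rcases lt_trichotomy ((s : ℝ)) ((s' : ℝ)) with h | h | h
      · exact absurd heq (hkey s s' h)
      · exact Subtype.ext h
      · exact absurd heq.symm (hkey s' s h)
    have : Countable Dk := hinj.countable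
    exact Set.countable_coe_iff.1 this
  -- reduce the interval integral to a set integral
  have hle : t₁ ≤ t₂ := ht₁₂.le
  simp only [intervalIntegral.integral_of_le hle]
  -- dominated convergence
  have hIocnull : (volume : Measure ℝ) (D ∪ {T}) = 0 := by
    refine measure_union_null (hDcount.measure_zero _) (measure_singleton T)
  refine tendsto_integral_of_dominated_convergence (fun _ => M)
    (fun n => aux_aesm_of_rightCont g hg_cont (ωn n) T t₁ t₂ ht₁ ht₂ (hωn_rc n)) ?_ ?_ ?_
  · show IntegrableOn (fun _ : ℝ => M) (Ioc t₁ t₂) volume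
    refine integrableOn_const ?_
    rw [Real.volume_Ioc]
    exact ENNReal.ofReal_ne_top
  · intro n
    exact Filter.Eventually.of_forall fun t => by
      simpa [Real.norm_eq_abs] using hM (ωn n t)
  · -- a.e. pointwise convergence
    rw [ae_restrict_iff' measurableSet_Ioc, MeasureTheory.ae_iff]
    refine measure_mono_null (fun t ht => ?_) hIocnull
    simp only [mem_setOf_eq, not_forall] at ht
    obtain ⟨htmem, hnot⟩ := ht
    by_contra hbad
    apply hnot
    simp only [mem_union, mem_singleton_iff, not_or] at hbad
    obtain ⟨hnD, hnT⟩ := hbad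
    have ht0 : (0:ℝ) < t := lt_of_le_of_lt ht₁ htmem.1
    have htT : t < T := lt_of_le_of_ne (le_trans htmem.2 ht₂) hnT
    -- `ω` is continuous at `t`
    have hLeq : Ls t = ω t := by
      by_contra hne
      exact hnD ⟨⟨ht0, htT⟩, hne⟩
    have hcont : ContinuousAt ω t := by
      unfold ContinuousAt
      rw [← nhdsLT_sup_nhdsGE t, tendsto_sup]
      constructor
      · rw [← hLeq]; exact hLs t ⟨ht0, htT.le⟩
      · exact hω_rc t ⟨ht0.le, htT⟩
    -- `ωn n t → ω t`
    have htIcc : t ∈ Icc 0 T := ⟨ht0.le, htT.le⟩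
    have hωnt : Tendsto (fun n => ωn n t) atTop (nhds (ω t)) := by
      rw [Metric.tendsto_nhds]
      intro ε hε
      obtain ⟨δ, hδ0, hδ⟩ := Metric.continuousAt_iff.1 hcont (ε / 2) (by linarith)
      filter_upwards [hl_conv δ hδ0, hω_conv (ε / 2) (by linarith)] with n h1 h2
      have hd1 : dist (ωn n t) (ω (l n t)) < ε / 2 := h2 t htIcc
      have hd2 : dist (ω (l n t)) (ω t) < ε / 2 := by
        apply hδ
        rw [Real.dist_eq]
        exact h1 t htIcc
      calc dist (ωn n t) (ω t) ≤ dist (ωn n t) (ω (l n t)) + dist (ω (l n t)) (ω t) :=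
            dist_triangle _ _ _
        _ < ε / 2 + ε / 2 := add_lt_add hd1 hd2
        _ = ε := by ring
    exact (hg_cont.tendsto _).comp hωnt
end
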